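/- Let E be a directed graph in which every cycle has an exit (Condition (L)), let g be a cycle in E, and suppose every vertex of E^0 connects to some vertex of g^0. Then g is not an exclusive cycle: there exist a vertex u ∈ g^0 and a cycle c based at u such that c is different, as a sequence of edges, from the rotate of g based at u. -/

import Mathlib

/-- A directed graph: a set of vertices, a set of edges, and source/range maps. -/
structure DirGraph where
  V : Type
  E : Type
  src : E → V
  rng : E → V

namespace DirGraph

variable (G : DirGraph)

/-- `Connects u v` means there is a finite path (possibly of length 0) from `u` to `v`,
i.e. `u ≥ v`. -/
inductive Connects : G.V → G.V → Prop
  | refl (v : G.V) : Connects v v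
  | step {u w : G.V} (e : G.E) : G.src e = u → Connects (G.rng e) w → Connects u w

/-- A vertex is a sink if it emits no edges. -/
def IsSink (v : G.V) : Prop := ∀ e : G.E, G.src e ≠ v

/-- A vertex is an infinite emitter if it emits infinitely many edges. -/
def IsInfiniteEmitter (v : G.V) : Prop := {e : G.E | G.src e = v}.Infinite

/-- A vertex is regular if it emits finitely many, but at least one, edges. -/
def IsRegular (v : G.V) : Prop :=
  {e : G.E | G.src e = v}.Finite ∧ {e : G.E | G.src e = v}.Nonempty

/-- A set of vertices is hereditary if it is closed under `≥`. -/
def Hereditary (H : Set G.V) : Prop := ∀ v ∈ H, ∀ w, G.Connects v w → w ∈ H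

/-- A set of vertices is saturated if it contains every regular vertex all of whose
emitted edges have range in the set. -/
def Saturated (H : Set G.V) : Prop :=
  ∀ v, G.IsRegular v → (∀ e : G.E, G.src e = v → G.rng e ∈ H) → v ∈ H

/-- `M(v) = {w : w ≥ v}`. -/
def Mv (v : G.V) : Set G.V := {w | G.Connects w v}

/-- A closed path based at `v`: a nonempty list of consecutive edges starting and ending
at `v`. -/
structure ClosedPath (v : G.V) where
  edges : List G.E
  ne : edges ≠ []
  chain : edges.Chain' (fun e f => G.rng e = G.src f)
  src_eq : G.src (edges.head ne) = v
  rng_eq : G.rng (edges.getLast ne) = v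

/-- A cycle based at `v`: a closed path based at `v` which does not pass through any
vertex twice. -/
structure Cycle (v : G.V) extends ClosedPath G v where
  nodup : (edges.map G.src).Nodup

/-- An infinite path: a sequence of consecutive edges, indexed by `ℕ`. -/
structure InfPath where
  edge : ℕ → G.E
  chain : ∀ n, G.rng (edge n) = G.src (edge (n + 1))

variable {G}

@[ext] lemma InfPath.ext {p q : G.InfPath} (h : p.edge = q.edge) : p = q := by
  cases p; cases q; simp only at h; subst h; rfl

/-- `τ_{>n}(p)`, the shift of the infinite path `p` by `n`. -/
def InfPath.shift (p : G.InfPath) (n : ℕ) : G.InfPath where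
  edge k := p.edge (k + n)
  chain k := by have := p.chain (k + n); rwa [show k + n + 1 = k + 1 + n by omega] at this

/-- Two infinite paths are tail-equivalent if some shift of the first equals some shift
of the second. -/
def TailEquiv (p q : G.InfPath) : Prop := ∃ m n : ℕ, p.shift m = q.shift n

/-- The set `p^0` of vertices visited by the infinite path `p`. -/
def InfPath.vertices (p : G.InfPath) : Set G.V := {v | ∃ n : ℕ, G.src (p.edge n) = v}

/-- `M(p) = {w : w ≥ v for some vertex v on p}`. -/
def Mp (p : G.InfPath) : Set G.V := {w | ∃ v ∈ p.vertices, G.Connects w v}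

/-- The set `c^0` of vertices visited by a closed path `c`. -/
def ClosedPath.vertexSet {v : G.V} (c : G.ClosedPath v) : Set G.V :=
  {w | ∃ e ∈ c.edges, G.src e = w}

/-- An exit for the (closed) path `c`: an edge `e` with `s(e) = s(e_i)` and `e ≠ e_i`
for some `i`. -/
def ClosedPath.HasExit {v : G.V} (c : G.ClosedPath v) : Prop :=
  ∃ (i : Fin c.edges.length) (e : G.E), G.src e = G.src (c.edges.get i) ∧ e ≠ c.edges.get i

lemma ClosedPath.length_pos {v : G.V} (c : G.ClosedPath v) : 0 < c.edges.length :=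
  List.length_pos_iff.mpr c.ne

/-- The rational infinite path `c^∞ = ccc⋯` attached to a closed path `c`. -/
def ClosedPath.toInfPath {v : G.V} (c : G.ClosedPath v) : G.InfPath where
  edge n := c.edges.get ⟨n % c.edges.length, Nat.mod_lt _ c.length_pos⟩
  chain n := by
    have hL : 0 < c.edges.length := c.length_pos
    have hmod : (n + 1) % c.edges.length = (n % c.edges.length + 1) % c.edges.length :=
      (Nat.mod_add_mod n c.edges.length 1).symm
    by_cases h : n % c.edges.length + 1 < c.edges.length
    · have h2 : (n + 1) % c.edges.length = n % c.edges.length + 1 := by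
        rw [hmod, Nat.mod_eq_of_lt h]
      have := List.isChain_iff_getElem.mp c.chain (n % c.edges.length) (by omega)
      simp only [h2]
      convert this using 3 <;> simp
    · have hlast : n % c.edges.length = c.edges.length - 1 := by
        have := Nat.mod_lt n hL; omega
      have h2 : (n + 1) % c.edges.length = 0 := by
        rw [hmod, hlast, Nat.sub_add_cancel hL, Nat.mod_self]
      have e1 : c.edges.get ⟨n % c.edges.length, Nat.mod_lt _ hL⟩ = c.edges.getLast c.ne := by
        rw [List.getLast_eq_getElem]
        simp [hlast]
      have e2 : c.edges.get ⟨(n + 1) % c.edges.length, Nat.mod_lt _ hL⟩ =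
          c.edges.head c.ne := by
        rw [List.head_eq_getElem]
        simp [h2]
      rw [e1, e2, c.rng_eq, c.src_eq]

end DirGraph

namespace DirGraph
variable {G : DirGraph}

lemma InfPath.shift_shift (p : G.InfPath) (m n : ℕ) :
    (p.shift m).shift n = p.shift (n + m) := by
  ext k
  show p.edge (k + n + m) = p.edge (k + (n + m))
  rw [Nat.add_assoc]

/-- Concatenation of two closed paths based at the same vertex. -/
def ClosedPath.comp {v : G.V} (c d : G.ClosedPath v) : G.ClosedPath v where
  edges := c.edges ++ d.edges
  ne := by simp [c.ne]
  chain := by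
    refine c.chain.append d.chain ?_
    intro x hx y hy
    rw [List.getLast?_eq_some_getLast c.ne, Option.mem_def, Option.some_inj] at hx
    rw [List.head?_eq_head d.ne, Option.mem_def, Option.some_inj] at hy
    rw [← hx, ← hy] at *
    rw [c.rng_eq, d.src_eq]
  src_eq := by
    have : (c.edges ++ d.edges).head (by simp [c.ne]) = c.edges.head c.ne := by
      rw [List.head_append]
      simp [c.ne]
    rw [this, c.src_eq]
  rng_eq := by
    have : (c.edges ++ d.edges).getLast (by simp [c.ne]) = d.edges.getLast d.ne := by
      rw [List.getLast_append]
      simp [d.ne]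
    rw [this, d.rng_eq]

/-- `c.pow m` is the closed path `c^{m+1}`. -/
def ClosedPath.pow {v : G.V} (c : G.ClosedPath v) : ℕ → G.ClosedPath v
  | 0 => c
  | (m + 1) => c.comp (c.pow m)

/-- Auxiliary index function for the infinite concatenation of a sequence of closed
paths based at the same vertex: `blockIdx f n` is the pair (block number, offset in
the block) corresponding to overall position `n`. -/
def blockIdx {v : G.V} (f : ℕ → G.ClosedPath v) : ℕ → (b : ℕ) × Fin (f b).edges.length
  | 0 => ⟨0, ⟨0, (f 0).length_pos⟩⟩
  | n + 1 =>
    if h : ((blockIdx f n).2 : ℕ) + 1 < (f (blockIdx f n).1).edges.length then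
      ⟨(blockIdx f n).1, ⟨(blockIdx f n).2 + 1, h⟩⟩
    else
      ⟨(blockIdx f n).1 + 1, ⟨0, (f ((blockIdx f n).1 + 1)).length_pos⟩⟩

/-- The infinite path `f 0 · f 1 · f 2 ⋯` obtained by concatenating a sequence of
closed paths based at the same vertex. -/
def infConcat {v : G.V} (f : ℕ → G.ClosedPath v) : G.InfPath where
  edge n := (f (blockIdx f n).1).edges.get (blockIdx f n).2
  chain n := by
    rw [blockIdx]
    by_cases h : ((blockIdx f n).2 : ℕ) + 1 < (f (blockIdx f n).1).edges.length
    · rw [dif_pos h]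
      exact List.isChain_iff_getElem.mp (f (blockIdx f n).1).chain ((blockIdx f n).2 : ℕ) (by omega)
    · rw [dif_neg h]
      have h2 : ((blockIdx f n).2 : ℕ) = (f (blockIdx f n).1).edges.length - 1 := by
        have := (blockIdx f n).2.isLt; omega
      have e1 : (f (blockIdx f n).1).edges.get (blockIdx f n).2 =
          (f (blockIdx f n).1).edges.getLast (f (blockIdx f n).1).ne := by
        rw [List.getLast_eq_getElem]
        simp only [List.get_eq_getElem]
        congr 1
      have e2 : (f ((blockIdx f n).1 + 1)).edges.get ⟨0, (f ((blockIdx f n).1 + 1)).length_pos⟩ =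
          (f ((blockIdx f n).1 + 1)).edges.head (f ((blockIdx f n).1 + 1)).ne := by
        rw [List.head_eq_getElem]
        rfl
      rw [e1]
      rw [e2]
      rw [(f (blockIdx f n).1).rng_eq]
      rw [(f ((blockIdx f n).1 + 1)).src_eq]

end DirGraph

namespace DirGraph

section Aux
variable {G : DirGraph}

private lemma gcongr_idx {α : Type*} (l : List α) {a b : ℕ} (h : a = b) (ha : a < l.length) :
    l[a]'ha = l[b]'(h ▸ ha) := by subst h; rfl

private lemma ClosedPath.rng_getElem_mod {v : G.V} (c : G.ClosedPath v) (a : ℕ) :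
    G.rng (c.edges[a % c.edges.length]'(Nat.mod_lt _ c.length_pos)) =
      G.src (c.edges[(a + 1) % c.edges.length]'(Nat.mod_lt _ c.length_pos)) := by
  have := c.toInfPath.chain a
  simpa [ClosedPath.toInfPath] using this

private lemma pierce {S : Set G.V} {w x : G.V} (h : G.Connects w x) :
    x ∈ S → (w ∈ S ∨ ∃ (y : G.V) (l : List G.E) (hl : l ≠ []), y ∈ S ∧
      l.Chain' (fun a b => G.rng a = G.src b) ∧ G.src (l.head hl) = w ∧
      G.rng (l.getLast hl) = y ∧ ∀ f ∈ l, G.src f ∉ S) := by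
  induction h with
  | refl v => exact fun hx => Or.inl hx
  | @step u w' e hs hc ih =>
    intro hx
    by_cases hu : u ∈ S
    · exact Or.inl hu
    right
    rcases ih hx with h1 | ⟨y, l, hl, hyS, hch, hhd, hlast, hall⟩
    · refine ⟨G.rng e, [e], by simp, h1, List.isChain_singleton e, hs, rfl, ?_⟩
      intro f hf
      simp only [List.mem_singleton] at hf
      subst hf; rw [hs]; exact hu
    · refine ⟨y, e :: l, by simp, hyS, ?_, hs, ?_, ?_⟩
      · refine List.isChain_cons.mpr ⟨?_, hch⟩
        intro b hb
        rw [List.head?_eq_head hl, Option.mem_def, Option.some_inj] at hb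
        rw [← hb, hhd]
      · rw [List.getLast_cons hl]; exact hlast
      · intro f hf
        rcases List.mem_cons.mp hf with h | h
        · subst h; rw [hs]; exact hu
        · exact hall f h

private lemma extract :
    ∀ (n : ℕ) (l : List G.E), l.length ≤ n → ∀ (hl : l ≠ []),
      l.Chain' (fun a b => G.rng a = G.src b) →
      ∃ (p : List G.E) (hp : p ≠ []),
        p.Chain' (fun a b => G.rng a = G.src b) ∧
        G.src (p.head hp) = G.src (l.head hl) ∧
        G.rng (p.getLast hp) = G.rng (l.getLast hl) ∧
        (p.map G.src).Nodup ∧ ∀ f ∈ p, f ∈ l := by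
  intro n
  induction n with
  | zero =>
    intro l hlen hl _
    exact absurd (List.length_eq_zero_iff.mp (Nat.le_zero.mp hlen)) hl
  | succ n ih =>
    intro l hlen hl hc
    by_cases hnd : (l.map G.src).Nodup
    · exact ⟨l, hl, hc, rfl, rfl, hnd, fun f hf => hf⟩
    have hstep : ∀ (a : ℕ) (ha : a + 1 < l.length),
        G.rng (l[a]'(by omega)) = G.src (l[a+1]'ha) := by
      intro a ha
      have := List.isChain_iff_getElem.mp hc a (by omega)
      simpa using this
    have main : ∀ (i j : ℕ) (hj : j < l.length) (hij : i < j),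
        G.src (l[i]'(hij.trans hj)) = G.src (l[j]'hj) →
        ∃ (p : List G.E) (hp : p ≠ []),
          p.Chain' (fun a b => G.rng a = G.src b) ∧
          G.src (p.head hp) = G.src (l.head hl) ∧
          G.rng (p.getLast hp) = G.rng (l.getLast hl) ∧
          (p.map G.src).Nodup ∧ ∀ f ∈ p, f ∈ l := by
      intro i j hj hij hdup
      have hlen' : (l.take i ++ l.drop j).length = i + (l.length - j) := by
        simp only [List.length_append, List.length_take, List.length_drop]
        omega
      have hne' : (l.take i ++ l.drop j) ≠ [] := by
        intro h0
        rw [h0] at hlen'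
        simp only [List.length_nil] at hlen'
        omega
      have hget1 : ∀ (k : ℕ) (hk : k < i),
          (l.take i ++ l.drop j)[k]'(by omega) = l[k]'(by omega) := by
        intro k hk
        rw [List.getElem_append_left (by simp [List.length_take]; omega)]
        exact List.getElem_take
      have hget2 : ∀ (k : ℕ) (hk1 : i ≤ k) (hk2 : k < (l.take i ++ l.drop j).length),
          (l.take i ++ l.drop j)[k]'hk2 = l[j + (k - i)]'(by omega) := by
        intro k hk1 hk2
        rw [List.getElem_append_right (by simp [List.length_take]; omega)]
        rw [List.getElem_drop]
        apply gcongr_idx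
        simp only [List.length_take]
        omega
      have hch' : (l.take i ++ l.drop j).Chain' (fun a b => G.rng a = G.src b) := by
        refine List.isChain_iff_getElem.mpr ?_
        intro k hk
        rcases lt_trichotomy (k + 1) i with h1 | h1 | h1
        · rw [hget1 k (by omega), hget1 (k+1) h1]
          exact hstep k (by omega)
        · rw [hget1 k (by omega), hget2 (k+1) (by omega) (by omega)]
          have e1 : j + (k + 1 - i) = j := by omega
          calc G.rng (l[k]'(by omega)) = G.src (l[k+1]'(by omega)) := hstep k (by omega)
            _ = G.src (l[i]'(by omega)) := congrArg G.src (gcongr_idx l h1 (by omega))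
            _ = G.src (l[j]'hj) := hdup
            _ = G.src (l[j + (k + 1 - i)]'(by omega)) :=
                congrArg G.src (gcongr_idx l e1.symm (by omega))
        · rw [hget2 k (by omega) (by omega), hget2 (k+1) (by omega) (by omega)]
          have e1 : j + (k + 1 - i) = (j + (k - i)) + 1 := by omega
          rw [gcongr_idx l e1]
          exact hstep (j + (k - i)) (by omega)
      have hhead' : G.src ((l.take i ++ l.drop j).head hne') = G.src (l.head hl) := by
        rw [List.head_eq_getElem, List.head_eq_getElem]
        rcases Nat.eq_zero_or_pos i with h0 | h0
        · rw [hget2 0 (by omega) (by omega)]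
          have e1 : j + (0 - i) = j := by omega
          rw [gcongr_idx l e1, ← hdup]
          apply congrArg
          apply gcongr_idx
          omega
        · exact congrArg G.src (hget1 0 h0)
      have hlast' : G.rng ((l.take i ++ l.drop j).getLast hne') =
          G.rng (l.getLast hl) := by
        rw [List.getLast_eq_getElem, List.getLast_eq_getElem]
        rw [hget2 ((l.take i ++ l.drop j).length - 1) (by omega) (by omega)]
        apply congrArg
        apply gcongr_idx
        omega
      have hmem' : ∀ f ∈ (l.take i ++ l.drop j), f ∈ l := by
        intro f hf
        rcases List.mem_append.mp hf with h | h
        · exact (List.take_sublist i l).subset h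
        · exact (List.drop_sublist j l).subset h
      obtain ⟨p, hp, pc, ph, pl, pnd, pm⟩ := ih (l.take i ++ l.drop j) (by omega) hne' hch'
      exact ⟨p, hp, pc, ph.trans hhead', pl.trans hlast', pnd,
        fun f hf => hmem' f (pm f hf)⟩
    rw [List.nodup_iff_injective_get, Function.not_injective_iff] at hnd
    obtain ⟨a, b, hab, hne2⟩ := hnd
    have ha' : (a : ℕ) < l.length := by have := a.isLt; simpa using this
    have hb' : (b : ℕ) < l.length := by have := b.isLt; simpa using this
    have hab' : G.src (l[(a : ℕ)]'ha') = G.src (l[(b : ℕ)]'hb') := by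
      simpa [List.get_eq_getElem] using hab
    have hne3 : (a : ℕ) ≠ (b : ℕ) := fun h => hne2 (Fin.ext h)
    rcases hne3.lt_or_gt with h | h
    · exact main a b hb' h hab'
    · exact main b a ha' h hab'.symm

end Aux

/-- If every cycle in `E` has an exit (Condition (L)) and every vertex connects to a
vertex of the cycle `g`, then `g` is not exclusive: some vertex `u = s(g_i)` on `g` is
the base of a cycle different from the rotate of `g` based at `u`. -/
theorem not_exclusive_of_condition_L {G : DirGraph}
    (hL : ∀ (u : G.V) (c : G.Cycle u), c.toClosedPath.HasExit)
    {v : G.V} (g : G.Cycle v)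
    (hconn : ∀ u : G.V, ∃ x ∈ g.toClosedPath.vertexSet, G.Connects u x) :
    ∃ (i : Fin g.edges.length) (c : G.Cycle (G.src (g.edges.get i))),
      c.edges ≠ g.edges.rotate i := by
  classical
  obtain ⟨i, e, hsrc, hne⟩ := hL v g
  have hn0 : 0 < g.edges.length := g.toClosedPath.length_pos
  have hemem : e ∉ g.edges := by
    intro hmem
    obtain ⟨k, hk, hke⟩ := List.mem_iff_getElem.mp hmem
    have hinj := List.nodup_iff_injective_get.mp g.nodup
    have h1 : ((g.edges.map G.src).get ⟨k, by simpa using hk⟩) =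
        ((g.edges.map G.src).get ⟨(i : ℕ), by simpa using i.isLt⟩) := by
      simp only [List.get_eq_getElem, List.getElem_map]
      rw [hke]
      simpa [List.get_eq_getElem] using hsrc
    have h2 := hinj h1
    have h3 : k = (i : ℕ) := by simpa using h2
    apply hne
    rw [← hke]
    subst h3
    simp [List.get_eq_getElem]
  have huS : G.src (g.edges.get i) ∈ g.toClosedPath.vertexSet :=
    ⟨g.edges.get i, List.get_mem g.edges i, rfl⟩
  obtain ⟨x, hxS, hcx⟩ := hconn (G.rng e)
  have key : ∃ (y : G.V) (l₀ : List G.E) (h₀ : l₀ ≠ []), y ∈ g.toClosedPath.vertexSet ∧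
      l₀.Chain' (fun a b => G.rng a = G.src b) ∧
      G.src (l₀.head h₀) = G.src (g.edges.get i) ∧
      G.rng (l₀.getLast h₀) = y ∧
      ∀ f ∈ l₀, f = e ∨ G.src f ∉ g.toClosedPath.vertexSet := by
    rcases pierce hcx hxS with hre | ⟨y, l, hl, hyS, hch, hhd, hlast, hall⟩
    · exact ⟨G.rng e, [e], by simp, hre, List.isChain_singleton e, hsrc, rfl,
        fun f hf => Or.inl (by simpa using hf)⟩
    · refine ⟨y, e :: l, by simp, hyS, ?_, hsrc, ?_, ?_⟩
      · refine List.isChain_cons.mpr ⟨?_, hch⟩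
        intro b hb
        rw [List.head?_eq_head hl, Option.mem_def, Option.some_inj] at hb
        rw [← hb, hhd]
      · rw [List.getLast_cons hl]; exact hlast
      · intro f hf
        rcases List.mem_cons.mp hf with h | h
        · exact Or.inl h
        · exact Or.inr (hall f h)
  obtain ⟨y, l₀, h₀, hyS, hch₀, hhd₀, hlast₀, hall₀⟩ := key
  obtain ⟨p, hp, pc, ph, pl, pnd, pm⟩ := extract l₀.length l₀ le_rfl h₀ hch₀
  have hpu : G.src (p.head hp) = G.src (g.edges.get i) := ph.trans hhd₀
  have hpe : p.head hp = e := by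
    rcases hall₀ _ (pm _ (List.head_mem hp)) with h | h
    · exact h
    · rw [hpu] at h
      exact absurd huS h
  have hep : e ∈ p := hpe ▸ List.head_mem hp
  obtain ⟨fy, hfy, hfys⟩ := hyS
  obtain ⟨j, hj, hjf⟩ := List.mem_iff_getElem.mp hfy
  have hyj : G.src (g.edges[j]'hj) = y := by rw [hjf]; exact hfys
  obtain ⟨m, hmdef⟩ : ∃ m, m = (g.edges.length + (i : ℕ) - j) % g.edges.length := ⟨_, rfl⟩
  have hm : m < g.edges.length := hmdef ▸ Nat.mod_lt _ hn0
  have hmj : (m + j) % g.edges.length = (i : ℕ) := by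
    rw [hmdef, Nat.mod_add_mod, Nat.sub_add_cancel (by omega), Nat.add_mod_left,
      Nat.mod_eq_of_lt i.isLt]
  have hrlen : (g.edges.rotate j).length = g.edges.length := List.length_rotate g.edges j
  have hrget : ∀ (k : ℕ) (hk : k < (g.edges.rotate j).length),
      (g.edges.rotate j)[k]'hk =
        g.edges[(k + j) % g.edges.length]'(Nat.mod_lt _ hn0) := by
    intro k hk
    rw [List.getElem_rotate]
  have hcyc : ∀ a : ℕ, G.rng (g.edges[a % g.edges.length]'(Nat.mod_lt _ hn0)) =
      G.src (g.edges[(a + 1) % g.edges.length]'(Nat.mod_lt _ hn0)) :=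
    ClosedPath.rng_getElem_mod g.toClosedPath
  have hchr : (g.edges.rotate j).Chain' (fun a b => G.rng a = G.src b) := by
    refine List.isChain_iff_getElem.mpr ?_
    intro k hk
    rw [hrget k (by omega), hrget (k + 1) (by omega)]
    calc G.rng (g.edges[(k + j) % g.edges.length]'(Nat.mod_lt _ hn0))
        = G.src (g.edges[(k + j + 1) % g.edges.length]'(Nat.mod_lt _ hn0)) := hcyc (k + j)
      _ = G.src (g.edges[(k + 1 + j) % g.edges.length]'(Nat.mod_lt _ hn0)) := by
          apply congrArg
          apply gcongr_idx
          rw [Nat.add_right_comm]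
  have hseglen : ((g.edges.rotate j).take m).length = m := by
    rw [List.length_take, hrlen]
    omega
  have hne' : ((g.edges.rotate j).take m) ++ p ≠ [] := by simp [hp]
  refine ⟨⟨j, hj⟩, ⟨⟨((g.edges.rotate j).take m) ++ p, hne', ?_, ?_, ?_⟩, ?_⟩, ?_⟩
  · -- chain
    refine List.isChain_append.mpr ⟨hchr.take m, pc, ?_⟩
    intro a ha b hb
    have hsegne : (g.edges.rotate j).take m ≠ [] := by
      intro h0
      rw [h0] at ha
      simp at ha
    have hm0 : 0 < m := by
      rcases Nat.eq_zero_or_pos m with h | h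
      · rw [h] at hsegne; simp at hsegne
      · exact h
    rw [List.getLast?_eq_getLast hsegne, Option.mem_def, Option.some_inj] at ha
    rw [List.head?_eq_head hp, Option.mem_def, Option.some_inj] at hb
    subst ha
    subst hb
    have hLg : ((g.edges.rotate j).take m).getLast hsegne =
        g.edges[(m - 1 + j) % g.edges.length]'(Nat.mod_lt _ hn0) := by
      rw [List.getLast_eq_getElem, List.getElem_take, hrget _ (by omega)]
      exact gcongr_idx _ (by rw [hseglen]) _
    rw [hLg, hpu]
    calc G.rng (g.edges[(m - 1 + j) % g.edges.length]'(Nat.mod_lt _ hn0))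
        = G.src (g.edges[(m - 1 + j + 1) % g.edges.length]'(Nat.mod_lt _ hn0)) :=
          hcyc (m - 1 + j)
      _ = G.src (g.edges.get i) := by
          simp only [List.get_eq_getElem]
          apply congrArg
          apply gcongr_idx
          have e1 : m - 1 + j + 1 = m + j := by omega
          rw [e1, hmj]
  · -- src_eq
    rw [List.head_eq_getElem]
    rcases Nat.eq_zero_or_pos m with hm0 | hm0
    · have hsl : ((g.edges.rotate j).take m).length = 0 := by omega
      have hpl : 0 < p.length := List.length_pos_iff.mpr hp
      rw [List.getElem_append_right (le_of_eq hsl)]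
      have hji : j = (i : ℕ) := by
        rw [hm0, Nat.zero_add, Nat.mod_eq_of_lt hj] at hmj
        exact hmj
      have h1 : p[0 - ((g.edges.rotate j).take m).length]'(by rw [hsl]; omega) =
          p[0]'hpl := gcongr_idx _ (by rw [hsl]) _
      rw [h1, ← List.head_eq_getElem hp, hpu]
      simp only [List.get_eq_getElem]
      apply congrArg
      apply gcongr_idx
      omega
    · rw [List.getElem_append_left (by omega), List.getElem_take, hrget _ (by omega)]
      simp only [List.get_eq_getElem]
      apply congrArg
      apply gcongr_idx
      rw [Nat.zero_add, Nat.mod_eq_of_lt hj]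
  · -- rng_eq
    have h1 : (((g.edges.rotate j).take m) ++ p).getLast hne' = p.getLast hp := by
      rw [List.getLast_append]
      simp [hp]
    rw [h1, pl, hlast₀, ← hyj]
    simp [List.get_eq_getElem]
  · -- nodup
    rw [List.map_append, List.nodup_append]
    refine ⟨?_, pnd, ?_⟩
    · rw [List.map_take, List.map_rotate]
      exact (List.take_sublist _ _).nodup (List.nodup_rotate.mpr g.nodup)
    · intro z hz1 z' hz2 hzz
      subst hzz
      obtain ⟨a, ha, haz⟩ := List.mem_map.mp hz1
      obtain ⟨kk, hkk, hka⟩ := List.mem_iff_getElem.mp ha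
      obtain ⟨f, hfp, hfz⟩ := List.mem_map.mp hz2
      have hkkm : kk < m := by rw [hseglen] at hkk; exact hkk
      have hz : z = G.src (g.edges[(kk + j) % g.edges.length]'(Nat.mod_lt _ hn0)) := by
        rw [← haz, ← hka, List.getElem_take, hrget kk (by omega)]
      rcases hall₀ f (pm f hfp) with hfe | hfS
      · have h1 : G.src (g.edges[(kk + j) % g.edges.length]'(Nat.mod_lt _ hn0)) =
            G.src (g.edges[(m + j) % g.edges.length]'(Nat.mod_lt _ hn0)) := by
          rw [← hz, ← hfz, hfe, hsrc]
          simp only [List.get_eq_getElem]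
          apply congrArg
          apply gcongr_idx
          rw [hmj]
        have hndr : ((g.edges.rotate j).map G.src).Nodup := by
          rw [List.map_rotate]
          exact List.nodup_rotate.mpr g.nodup
        have hinj := List.nodup_iff_injective_get.mp hndr
        have h2 : (⟨kk, by simp [hrlen]; omega⟩ : Fin ((g.edges.rotate j).map G.src).length) =
            ⟨m, by simp [hrlen]; omega⟩ := by
          apply hinj
          simp only [List.get_eq_getElem, List.getElem_map]
          rw [hrget kk (by omega), hrget m (by omega)]
          exact h1
        have : kk = m := by simpa using h2
        omega
      · refine hfS ⟨g.edges[(kk + j) % g.edges.length]'(Nat.mod_lt _ hn0),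
          List.getElem_mem _, ?_⟩
        rw [← hz, ← hfz]
  · -- inequality
    intro heq
    have heq' : ((g.edges.rotate j).take m) ++ p = g.edges.rotate j := heq
    have h1 : e ∈ ((g.edges.rotate j).take m) ++ p := List.mem_append.mpr (Or.inr hep)
    rw [heq'] at h1
    exact hemem (List.mem_rotate.mp h1)

end DirGraph
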